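/- arXiv:2007.04469 — 2 statements merged into one kernel-verified Lean document; each statement's English description precedes it below -/
import Mathlib

section
/- If n is odd, then every spiky function on E_n is the connectivity function of a matroid. -/
/-- The ground set of a rank-`n` spike: `n` disjoint legs, where the leg `i` consists of
`x_i = (i, true)` and `y_i = (i, false)`. -/
abbrev En (n : ℕ) := Fin n × Bool

/-- The `i`-th leg `L_i = {x_i, y_i}`. -/
def leg (n : ℕ) (i : Fin n) : Set (En n) := {(i, true), (i, false)}

/-- A transversal: a set containing exactly one element of each leg. -/
def IsTransversal {n : ℕ} (X : Set (En n)) : Prop :=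
  ∀ i : Fin n, ((i, true) ∈ X ∧ (i, false) ∉ X) ∨ ((i, true) ∉ X ∧ (i, false) ∈ X)

/-- The hypercube graph `H_n` on transversals: two transversals are adjacent iff they
differ in exactly one element (i.e. their symmetric difference has two elements). -/
def Hn (n : ℕ) : SimpleGraph (Set (En n)) where
  Adj X Y := IsTransversal X ∧ IsTransversal Y ∧ (symmDiff X Y).ncard = 2
  symm := ⟨fun X Y ⟨h1, h2, h3⟩ => ⟨h2, h1, by rwa [symmDiff_comm]⟩⟩
  loopless := ⟨fun X ⟨_, _, h3⟩ => by
    simp [symmDiff_self, Set.bot_eq_empty] at h3⟩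

/-- `I` is an independent set of the hypercube graph `H_n`. -/
def IndepInHn (n : ℕ) (I : Set (Set (En n))) : Prop :=
  (∀ X ∈ I, IsTransversal X) ∧ ∀ X ∈ I, ∀ Y ∈ I, ¬ (Hn n).Adj X Y

/-- `l(X)`: the number of legs which `X` meets. -/
noncomputable def legCount {n : ℕ} (X : Set (En n)) : ℕ :=
  Set.ncard {i : Fin n | (i, true) ∈ X ∨ (i, false) ∈ X}

/-- The rank of a set `X` in a matroid `M`: the largest cardinality of an independent
subset of `X`. -/
noncomputable def mrank {α : Type*} (M : Matroid α) (X : Set α) : ℕ :=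
  sSup {k | ∃ I, M.Indep I ∧ I ⊆ X ∧ I.ncard = k}

/-- The connectivity function of a matroid: μ_M(X) = r(X) + r(E−X) − r(E). -/
noncomputable def mconn {α : Type*} (M : Matroid α) (X : Set α) : ℤ :=
  (mrank M X : ℤ) + (mrank M (M.E \ X) : ℤ) - (mrank M M.E : ℤ)

/-- A circuit of a matroid: a minimal dependent subset of the ground set. -/
def IsCircuit {α : Type*} (M : Matroid α) (C : Set α) : Prop :=
  C ⊆ M.E ∧ ¬ M.Indep C ∧ ∀ D ⊂ C, M.Indep D

/-- The circuits `{x_i, y_i, x_j, y_j}` for `i < j` (i.e. unions of two distinct legs). -/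
def LegPairs (n : ℕ) : Set (Set (En n)) :=
  {C | ∃ i j : Fin n, i ≠ j ∧ C = leg n i ∪ leg n j}

/-- The circuit collection of the spike `S(I)`: unions of two legs, the transversals
in `I`, and all `(n+1)`-element sets containing none of the preceding circuits. -/
def SpikeCircuits (n : ℕ) (I : Set (Set (En n))) : Set (Set (En n)) :=
  (LegPairs n ∪ I) ∪ {C | C.ncard = n + 1 ∧ ∀ D ∈ LegPairs n ∪ I, ¬ D ⊆ C}

open Classical in
/-- The rank function of the free spike `S(∅)` (every rank-`n` spike has this rank
function away from the transversals). -/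
noncomputable def freeSpikeRank (n : ℕ) (X : Set (En n)) : ℕ :=
  if ∀ i : Fin n, ¬ Disjoint (leg n i) X then n
  else if ∃ i, leg n i ⊆ X then legCount X + 1
  else X.ncard

/-- `λ_n(X) = r_n(X) + r_n(E_n − X) − n`: the common value of the connectivity function
of any rank-`n` spike on a non-transversal set `X`. -/
noncomputable def lamN (n : ℕ) (X : Set (En n)) : ℤ :=
  (freeSpikeRank n X : ℤ) + (freeSpikeRank n Xᶜ : ℤ) - (n : ℤ)

/-- A spiky function: symmetric, extends `λ_n` on non-transversals, takes values in
`{n−2, n−1, n}` on transversals, and satisfies `λ(X) + λ(Y) ≥ 2n−2` for transversals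
`X`, `Y` differing in exactly one element. -/
noncomputable def IsSpiky (n : ℕ) (lam : Set (En n) → ℕ) : Prop :=
  (∀ X, lam X = lam Xᶜ) ∧
  (∀ X, ¬ IsTransversal X → (lam X : ℤ) = lamN n X) ∧
  (∀ X, IsTransversal X → lam X = n - 2 ∨ lam X = n - 1 ∨ lam X = n) ∧
  (∀ X Y, IsTransversal X → IsTransversal Y → (symmDiff X Y).ncard = 2 →
    2 * n - 2 ≤ lam X + lam Y)

namespace SpikeAux
variable {n : ℕ}

lemma mem_leg {i : Fin n} {e : En n} : e ∈ leg n i ↔ e.1 = i := by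
  obtain ⟨a, b⟩ := e
  cases b <;> simp [leg, Prod.ext_iff]

lemma leg_subset_iff {i : Fin n} {X : Set (En n)} :
    leg n i ⊆ X ↔ (i, true) ∈ X ∧ (i, false) ∈ X := by
  constructor
  · intro h; exact ⟨h (by simp [leg]), h (by simp [leg])⟩
  · rintro ⟨h1, h2⟩ e he
    rcases he with rfl | rfl <;> assumption

lemma not_disjoint_iff_meets {i : Fin n} {X : Set (En n)} :
    ¬ Disjoint (leg n i) X ↔ ((i, true) ∈ X ∨ (i, false) ∈ X) := by
  rw [Set.not_disjoint_iff]
  constructor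
  · rintro ⟨e, he, heX⟩
    rw [mem_leg] at he
    obtain ⟨a, b⟩ := e; cases b <;> simp_all
  · rintro (h | h)
    · exact ⟨(i, true), by simp [leg], h⟩
    · exact ⟨(i, false), by simp [leg], h⟩

lemma legCount_eq_image (X : Set (En n)) : legCount X = (Prod.fst '' X).ncard := by
  unfold legCount
  congr 1
  ext i
  simp only [Set.mem_setOf_eq, Set.mem_image]
  constructor
  · rintro (h | h)
    · exact ⟨(i, true), h, rfl⟩
    · exact ⟨(i, false), h, rfl⟩
  · rintro ⟨⟨a, b⟩, hab, rfl⟩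
    cases b
    · right; exact hab
    · left; exact hab

lemma legCount_le (X : Set (En n)) : legCount X ≤ n := by
  rw [legCount_eq_image]
  calc (Prod.fst '' X).ncard ≤ (Set.univ : Set (Fin n)).ncard :=
        Set.ncard_le_ncard (Set.subset_univ _) (Set.toFinite _)
    _ = n := by rw [Set.ncard_univ]; simp

lemma legCount_mono {X Y : Set (En n)} (h : X ⊆ Y) : legCount X ≤ legCount Y := by
  rw [legCount_eq_image, legCount_eq_image]
  exact Set.ncard_le_ncard (Set.image_mono h) (Set.toFinite _)

lemma ncard_of_noFull {X : Set (En n)} (h : ∀ i, ¬ leg n i ⊆ X) :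
    X.ncard = legCount X := by
  rw [legCount_eq_image]
  refine (Set.ncard_image_of_injOn ?_).symm
  rintro ⟨a, b⟩ ha ⟨c, d⟩ hc (h1 : a = c)
  subst h1
  by_contra hne
  have hbd : b ≠ d := fun hh => hne (by rw [hh])
  apply h a
  rw [leg_subset_iff]
  cases b <;> cases d <;> simp_all

lemma ncard_le_legCount_add_one {X : Set (En n)}
    (h : ∀ i j : Fin n, i ≠ j → ¬ (leg n i ∪ leg n j ⊆ X)) :
    X.ncard ≤ legCount X + 1 := by
  by_cases hf : ∀ i, ¬ leg n i ⊆ X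
  · rw [ncard_of_noFull hf]; omega
  · push_neg at hf
    obtain ⟨m, hm⟩ := hf
    set X' := X \ {(m, false)} with hX'
    have hX'sub : X' ⊆ X := Set.diff_subset
    have hnf : ∀ i, ¬ leg n i ⊆ X' := by
      intro i hi
      rw [leg_subset_iff] at hi
      rcases eq_or_ne i m with rfl | hne
      · exact hi.2.2 rfl
      · exact h i m hne (Set.union_subset (leg_subset_iff.2 ⟨(hX'sub hi.1), hX'sub hi.2⟩) hm)
    have h1 : X ⊆ insert (m, false) X' := by
      intro e he
      by_cases he' : e = (m, false)
      · exact Or.inl he'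
      · exact Or.inr ⟨he, he'⟩
    calc X.ncard ≤ (insert (m, false) X').ncard := Set.ncard_le_ncard h1 (Set.toFinite _)
      _ ≤ X'.ncard + 1 := Set.ncard_insert_le _ _
      _ = legCount X' + 1 := by rw [ncard_of_noFull hnf]
      _ ≤ legCount X + 1 := by have := legCount_mono hX'sub; omega

lemma transversal_compl {X : Set (En n)} (h : IsTransversal X) : IsTransversal Xᶜ := by
  intro i
  rcases h i with ⟨h1, h2⟩ | ⟨h1, h2⟩
  · right; exact ⟨fun hh => hh h1, h2⟩
  · left; exact ⟨h1, fun hh => hh h2⟩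

lemma transversal_noFull {X : Set (En n)} (h : IsTransversal X) (i : Fin n) :
    ¬ leg n i ⊆ X := by
  rw [leg_subset_iff]
  rintro ⟨h1, h2⟩
  rcases h i with ⟨_, hh⟩ | ⟨hh, _⟩ <;> exact hh ‹_›

lemma transversal_meets {X : Set (En n)} (h : IsTransversal X) (i : Fin n) :
    ¬ Disjoint (leg n i) X := by
  rw [not_disjoint_iff_meets]
  rcases h i with ⟨h1, _⟩ | ⟨_, h1⟩
  · exact Or.inl h1
  · exact Or.inr h1

lemma transversal_legCount {X : Set (En n)} (h : IsTransversal X) : legCount X = n := by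
  unfold legCount
  have : {i : Fin n | (i, true) ∈ X ∨ (i, false) ∈ X} = Set.univ := by
    ext i
    simp only [Set.mem_setOf_eq, Set.mem_univ, iff_true]
    rcases h i with ⟨h1, _⟩ | ⟨_, h1⟩
    · exact Or.inl h1
    · exact Or.inr h1
  rw [this, Set.ncard_univ]; simp

lemma transversal_ncard {X : Set (En n)} (h : IsTransversal X) : X.ncard = n := by
  rw [ncard_of_noFull (transversal_noFull h), transversal_legCount h]

/-- If two transversals have symmetric difference of size 2, it is a single leg. -/
lemma symmDiff_eq_leg {X Y : Set (En n)} (hX : IsTransversal X) (hY : IsTransversal Y)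
    (h2 : (symmDiff X Y).ncard = 2) : ∃ m : Fin n, symmDiff X Y = leg n m := by
  have hmem : ∀ i : Fin n, ((i, true) ∈ symmDiff X Y ↔ (i, false) ∈ symmDiff X Y) := by
    intro i
    simp only [Set.mem_symmDiff]
    rcases hX i with ⟨a1, a2⟩ | ⟨a1, a2⟩ <;> rcases hY i with ⟨b1, b2⟩ | ⟨b1, b2⟩ <;> tauto
  have hfull : ∀ e : En n, e ∈ symmDiff X Y → leg n e.1 ⊆ symmDiff X Y := by
    rintro ⟨a, b⟩ he
    rw [leg_subset_iff]
    cases b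
    · exact ⟨(hmem a).2 he, he⟩
    · exact ⟨he, (hmem a).1 he⟩
  have hne : (symmDiff X Y).Nonempty := by
    rw [Set.nonempty_iff_ne_empty]
    intro hh; rw [hh] at h2; simp at h2
  obtain ⟨e, he⟩ := hne
  refine ⟨e.1, ?_⟩
  have hsub : leg n e.1 ⊆ symmDiff X Y := hfull e he
  have hcard : (leg n e.1).ncard = 2 := by
    rw [leg, Set.ncard_insert_of_notMem (by simp), Set.ncard_singleton]
  exact (Set.eq_of_subset_of_ncard_le hsub (by rw [h2, hcard]) (Set.toFinite _)).symm

/-- number of "true" elements of X -/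
noncomputable def tcard (X : Set (En n)) : ℕ := Set.ncard {i : Fin n | (i, true) ∈ X}

lemma tcard_compl {X : Set (En n)} : tcard (Xᶜ) = n - tcard X := by
  unfold tcard
  have h1 : {i : Fin n | (i, true) ∈ Xᶜ} = {i : Fin n | (i, true) ∈ X}ᶜ := by
    ext i; simp
  have h2 := Set.ncard_add_ncard_compl {i : Fin n | (i, true) ∈ X}
  rw [h1]
  have h3 : Nat.card (Fin n) = n := by simp
  omega

lemma tcard_le (X : Set (En n)) : tcard X ≤ n := by
  unfold tcard
  calc _ ≤ (Set.univ : Set (Fin n)).ncard := Set.ncard_le_ncard (Set.subset_univ _) (Set.toFinite _)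
    _ = n := by rw [Set.ncard_univ]; simp

/-- adjacent transversals have different tcard parity -/
lemma adj_parity {X Y : Set (En n)} (hX : IsTransversal X) (hY : IsTransversal Y)
    (h2 : (symmDiff X Y).ncard = 2) : ¬ (Even (tcard X) ↔ Even (tcard Y)) := by
  obtain ⟨m, hm⟩ := symmDiff_eq_leg hX hY h2
  have hmt : (m, true) ∈ symmDiff X Y := by rw [hm]; simp [leg]
  have hagree : ∀ i : Fin n, i ≠ m → ((i, true) ∈ X ↔ (i, true) ∈ Y) := by
    intro i hi
    have : (i, true) ∉ symmDiff X Y := by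
      rw [hm, mem_leg]; exact hi
    rw [Set.mem_symmDiff] at this; tauto
  rw [Set.mem_symmDiff] at hmt
  -- WLOG argument: sets differ exactly at m
  have key : ∀ Z W : Set (En n), (m, true) ∈ Z → (m, true) ∉ W →
      (∀ i : Fin n, i ≠ m → ((i, true) ∈ Z ↔ (i, true) ∈ W)) →
      tcard Z = tcard W + 1 := by
    intro Z W hZ hW hiff
    unfold tcard
    have : {i : Fin n | (i, true) ∈ Z} = insert m {i : Fin n | (i, true) ∈ W} := by
      ext i
      simp only [Set.mem_setOf_eq, Set.mem_insert_iff]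
      rcases eq_or_ne i m with rfl | hi
      · simp [hZ]
      · rw [hiff i hi]; simp [hi]
    rw [this, Set.ncard_insert_of_notMem (by simp [hW]) (Set.toFinite _)]
  rcases hmt with ⟨hZ, hW⟩ | ⟨hZ, hW⟩
  · have := key X Y hZ hW hagree
    rw [this, Nat.even_add_one]; tauto
  · have := key Y X hZ hW (fun i hi => (hagree i hi).symm)
    rw [this, Nat.even_add_one]; tauto

/-! ### The independent set `I` and the spike independence predicate -/

def ISet (n : ℕ) (lam : Set (En n) → ℕ) : Set (Set (En n)) :=
  {X | IsTransversal X ∧ (lam X + 2 = n ∨ (lam X + 1 = n ∧ Even (tcard X)))}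

def SpikeIndep (n : ℕ) (I : Set (Set (En n))) (J : Set (En n)) : Prop :=
  J.ncard ≤ n ∧ (∀ i j : Fin n, i ≠ j → ¬ (leg n i ∪ leg n j ⊆ J)) ∧ J ∉ I

lemma ISet_trans {lam : Set (En n) → ℕ} {X : Set (En n)} (h : X ∈ ISet n lam) :
    IsTransversal X := h.1

/-- key: members of `ISet` are pairwise non-adjacent in the hypercube. -/
lemma ISet_not_adj (hn : 2 < n) (hodd : Odd n) {lam : Set (En n) → ℕ}
    (hsym : ∀ X, lam X = lam Xᶜ)
    (hineq : ∀ X Y, IsTransversal X → IsTransversal Y → (symmDiff X Y).ncard = 2 →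
      2 * n - 2 ≤ lam X + lam Y)
    {X Y : Set (En n)} (hX : X ∈ ISet n lam) (hY : Y ∈ ISet n lam) :
    (symmDiff X Y).ncard ≠ 2 := by
  intro h2
  have hpar := adj_parity hX.1 hY.1 h2
  have hge := hineq X Y hX.1 hY.1 h2
  rcases hX.2 with hx | ⟨hx, hxe⟩ <;> rcases hY.2 with hy | ⟨hy, hye⟩
  · omega
  · omega
  · omega
  · exact hpar ⟨fun _ => hye, fun _ => hxe⟩

def partner (e : En n) : En n := (e.1, !e.2)

lemma partner_ne (e : En n) : partner e ≠ e := by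
  obtain ⟨a, b⟩ := e; cases b <;> simp [partner]

lemma partner_partner (e : En n) : partner (partner e) = e := by
  obtain ⟨a, b⟩ := e; cases b <;> simp [partner]

lemma partner_fst (e : En n) : (partner e).1 = e.1 := rfl

lemma partner_inj {e f : En n} (h : partner e = partner f) : e = f := by
  rw [← partner_partner e, h, partner_partner]

lemma leg_eq_pair (e : En n) : leg n e.1 = {e, partner e} := by
  obtain ⟨a, b⟩ := e
  cases b <;> simp [leg, partner, Set.pair_comm]

lemma leg_pair_subset {J : Set (En n)} {e : En n} (he : e ∈ J) (hp : partner e ∈ J) :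
    leg n e.1 ⊆ J := by
  rw [leg_eq_pair]
  exact Set.insert_subset he (Set.singleton_subset_iff.2 hp)

/-- The empty set is spike-independent. -/
lemma spikeIndep_empty (hn : 0 < n) {lam : Set (En n) → ℕ} :
    SpikeIndep n (ISet n lam) ∅ := by
  refine ⟨by simp, fun i j hij hsub => ?_, fun hmem => ?_⟩
  · have : (i, true) ∈ leg n i ∪ leg n j := Or.inl (by simp [leg])
    exact absurd (hsub this) (Set.notMem_empty _)
  · rcases (ISet_trans hmem) ⟨0, hn⟩ with ⟨h, _⟩ | ⟨_, h⟩ <;> simp at h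

/-- Spike independence is downward closed. -/
lemma spikeIndep_subset {lam : Set (En n) → ℕ} {J K : Set (En n)}
    (hK : SpikeIndep n (ISet n lam) K) (hJK : J ⊆ K) : SpikeIndep n (ISet n lam) J := by
  obtain ⟨hc, hl, hi⟩ := hK
  refine ⟨le_trans (Set.ncard_le_ncard hJK (Set.toFinite _)) hc,
    fun i j hij hsub => hl i j hij (hsub.trans hJK), fun hmem => ?_⟩
  have hJn : J.ncard = n := transversal_ncard (ISet_trans hmem)
  have hKn : K.ncard ≤ n := hc
  have : J = K := Set.eq_of_subset_of_ncard_le hJK (by omega) (Set.toFinite _)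
  exact hi (this ▸ hmem)

/-- The augmentation property for spike independence. -/
lemma spikeIndep_aug (hn : 2 < n) (hodd : Odd n) {lam : Set (En n) → ℕ}
    (hsym : ∀ X, lam X = lam Xᶜ)
    (hineq : ∀ X Y, IsTransversal X → IsTransversal Y → (symmDiff X Y).ncard = 2 →
      2 * n - 2 ≤ lam X + lam Y)
    {J K : Set (En n)} (hJ : SpikeIndep n (ISet n lam) J) (hK : SpikeIndep n (ISet n lam) K)
    (hlt : J.ncard < K.ncard) :
    ∃ e ∈ K, e ∉ J ∧ SpikeIndep n (ISet n lam) (insert e J) := by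
  classical
  by_contra hcon
  push_neg at hcon
  -- every candidate is bad; analyze badness
  have hbad : ∀ e ∈ K, e ∉ J →
      ((∃ m, leg n m ⊆ J) ∧ partner e ∈ J) ∨ insert e J ∈ ISet n lam := by
    intro e heK heJ
    have hb := hcon e heK heJ
    unfold SpikeIndep at hb
    push_neg at hb
    have hc1 : (insert e J).ncard ≤ n := by
      calc (insert e J).ncard ≤ J.ncard + 1 := Set.ncard_insert_le _ _
        _ ≤ K.ncard := by omega
        _ ≤ n := hK.1
    by_cases hlp : ∀ i j : Fin n, i ≠ j → ¬ (leg n i ∪ leg n j ⊆ insert e J)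
    · exact Or.inr (hb hc1 hlp)
    · push_neg at hlp
      obtain ⟨i, j, hij, hsub⟩ := hlp
      left
      -- e must lie in one of the two legs
      have hmem : e ∈ leg n i ∪ leg n j := by
        by_contra hne
        exact hJ.2.1 i j hij (fun f hf => by
          rcases hsub hf with rfl | hfJ
          · exact absurd hf hne
          · exact hfJ)
      have hsplit : ∀ a b : Fin n, a ≠ b → e ∈ leg n a → leg n a ∪ leg n b ⊆ insert e J →
          (∃ m, leg n m ⊆ J) ∧ partner e ∈ J := by
        intro a b hab hea hsub'
        have hbJ : leg n b ⊆ J := by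
          intro f hf
          rcases hsub' (Or.inr hf) with rfl | hfJ
          · exact absurd ((mem_leg.1 hea).symm.trans (mem_leg.1 hf)) hab
          · exact hfJ
        have hpa : partner e ∈ leg n a :=
          mem_leg.2 (by rw [partner_fst]; exact mem_leg.1 hea)
        rcases hsub' (Or.inl hpa) with hpe | hpJ
        · exact absurd hpe (partner_ne e)
        · exact ⟨⟨b, hbJ⟩, hpJ⟩
      rcases hmem with hea | heb
      · exact hsplit i j hij hea hsub
      · exact hsplit j i (Ne.symm hij) heb (by rwa [Set.union_comm])
  by_cases hfull : ∃ m, leg n m ⊆ J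
  · -- Case B : J contains a full leg; use the partner injection
    obtain ⟨m0, hm0⟩ := hfull
    have hpart : ∀ e ∈ K, e ∉ J → partner e ∈ J := by
      intro e heK heJ
      rcases hbad e heK heJ with ⟨_, hp⟩ | hI
      · exact hp
      · exact absurd (hm0.trans (Set.subset_insert e J))
          (transversal_noFull (ISet_trans hI) m0)
    by_cases hcol : ∃ e0 ∈ K, e0 ∉ J ∧ partner e0 ∈ K
    · obtain ⟨e0, he0K, he0J, hpe0K⟩ := hcol
      have hlegK : leg n e0.1 ⊆ K := leg_pair_subset he0K hpe0K
      have hne0 : e0.1 ≠ m0 := by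
        intro h
        exact he0J (hm0 (h ▸ mem_leg.2 rfl))
      have hnotm0K : ¬ leg n m0 ⊆ K := fun h => hK.2.1 e0.1 m0 hne0 (Set.union_subset hlegK h)
      have hb : ∃ b ∈ leg n m0, b ∉ K := by
        by_contra hh; push_neg at hh; exact hnotm0K hh
      obtain ⟨b, hbleg, hbK⟩ := hb
      have hbJ : b ∈ J := hm0 hbleg
      set φ : En n → En n := fun e => if e ∈ J then e else if partner e ∈ K then b else partner e
        with hφ
      have hmaps : ∀ e ∈ K, φ e ∈ J := by
        intro e heK
        by_cases h1 : e ∈ J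
        · simp [hφ, h1]
        · by_cases h2 : partner e ∈ K
          · simp [hφ, h1, h2, hbJ]
          · simp only [hφ, if_neg h1, if_pos h2]
            · simpa [h1, h2] using hpart e heK h1
      have hinj : Set.InjOn φ K := by
        intro e1 h1 e2 h2 heq
        by_cases j1 : e1 ∈ J <;> by_cases j2 : e2 ∈ J
        · simpa [hφ, j1, j2] using heq
        · by_cases p2 : partner e2 ∈ K
          · exfalso
            have : e1 = b := by simpa [hφ, j1, j2, p2] using heq
            exact hbK (this ▸ h1)
          · exfalso
            have he : e1 = partner e2 := by simpa [hφ, j1, j2, p2] using heq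
            exact p2 (he ▸ h1)
        · by_cases p1 : partner e1 ∈ K
          · exfalso
            have : b = e2 := by simpa [hφ, j1, j2, p1] using heq
            exact hbK (this ▸ h2)
          · exfalso
            have he : partner e1 = e2 := by simpa [hφ, j1, j2, p1] using heq
            exact p1 (he ▸ h2)
        · by_cases p1 : partner e1 ∈ K <;> by_cases p2 : partner e2 ∈ K
          · -- both collide : both legs fully in K
            have hleg1 : leg n e1.1 ⊆ K := leg_pair_subset h1 p1
            have hleg2 : leg n e2.1 ⊆ K := leg_pair_subset h2 p2
            by_cases h12 : e1.1 = e2.1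
            · rcases eq_or_ne e1 e2 with h | hne
              · exact h
              · exfalso
                have : e2 ∈ leg n e1.1 := mem_leg.2 h12.symm
                rw [leg_eq_pair] at this
                rcases this with h | h
                · exact hne (h.symm)
                · rw [Set.mem_singleton_iff] at h
                  exact j2 (h ▸ hpart e1 h1 j1)
            · exact absurd (Set.union_subset hleg1 hleg2) (hK.2.1 e1.1 e2.1 h12)
          · exfalso
            have hbe : b = partner e2 := by simpa [hφ, j1, j2, p1, p2] using heq
            have : e2.1 = m0 := by
              have h1' : b.1 = m0 := mem_leg.1 hbleg
              rw [hbe, partner_fst] at h1'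
              exact h1'
            exact j2 (hm0 (mem_leg.2 this))
          · exfalso
            have hbe : partner e1 = b := by simpa [hφ, j1, j2, p1, p2] using heq
            have : e1.1 = m0 := by
              have h1' : b.1 = m0 := mem_leg.1 hbleg
              rw [← hbe, partner_fst] at h1'
              exact h1'
            exact j1 (hm0 (mem_leg.2 this))
          · have : partner e1 = partner e2 := by simpa [hφ, j1, j2, p1, p2] using heq
            exact partner_inj this
      have : K.ncard ≤ J.ncard := by
        calc K.ncard = (φ '' K).ncard := (Set.ncard_image_of_injOn hinj).symm
          _ ≤ J.ncard := Set.ncard_le_ncard (by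
              rintro f ⟨e, heK, rfl⟩; exact hmaps e heK) (Set.toFinite _)
      omega
    · -- no collision : direct injection
      push_neg at hcol
      set φ : En n → En n := fun e => if e ∈ J then e else partner e with hφ
      have hmaps : ∀ e ∈ K, φ e ∈ J := by
        intro e heK
        by_cases h1 : e ∈ J
        · simp [hφ, h1]
        · simpa [hφ, h1] using hpart e heK h1
      have hinj : Set.InjOn φ K := by
        intro e1 h1 e2 h2 heq
        by_cases j1 : e1 ∈ J <;> by_cases j2 : e2 ∈ J
        · simpa [hφ, j1, j2] using heq
        · exfalso
          have he : e1 = partner e2 := by simpa [hφ, j1, j2] using heq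
          exact hcol e2 h2 j2 (he ▸ h1)
        · exfalso
          have he : partner e1 = e2 := by simpa [hφ, j1, j2] using heq
          exact hcol e1 h1 j1 (he ▸ h2)
        · exact partner_inj (by simpa [hφ, j1, j2] using heq)
      have : K.ncard ≤ J.ncard := by
        calc K.ncard = (φ '' K).ncard := (Set.ncard_image_of_injOn hinj).symm
          _ ≤ J.ncard := Set.ncard_le_ncard (by
              rintro f ⟨e, heK, rfl⟩; exact hmaps e heK) (Set.toFinite _)
      omega
  · -- Case A : J has no full leg; every bad insertion is a transversal in I
    have hA : ∀ e ∈ K, e ∉ J → insert e J ∈ ISet n lam := by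
      intro e heK heJ
      rcases hbad e heK heJ with ⟨hf, _⟩ | hI
      · exact absurd hf hfull
      · exact hI
    have hKJne : (K \ J).Nonempty := by
      rw [Set.nonempty_iff_ne_empty]
      intro h
      have : K ⊆ J := fun e he => by
        by_contra heJ
        exact absurd (Set.mem_diff_of_mem he heJ) (h ▸ Set.notMem_empty e)
      have := Set.ncard_le_ncard this (Set.toFinite _)
      omega
    by_cases h2 : 1 < (K \ J).ncard
    · rw [Set.one_lt_ncard_iff (Set.toFinite _)] at h2
      obtain ⟨e1, e2, he1, he2, hne⟩ := h2
      have hT1 := hA e1 he1.1 he1.2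
      have hT2 := hA e2 he2.1 he2.2
      have hsd : symmDiff (insert e1 J) (insert e2 J) = {e1, e2} := by
        ext f
        simp only [Set.mem_symmDiff, Set.mem_insert_iff, Set.mem_singleton_iff]
        constructor
        · rintro (⟨hf, hnot⟩ | ⟨hf, hnot⟩)
          · rcases hf with rfl | hf
            · exact Or.inl rfl
            · exact absurd (Or.inr hf) hnot
          · rcases hf with rfl | hf
            · exact Or.inr rfl
            · exact absurd (Or.inr hf) hnot
        · rintro (rfl | rfl)
          · exact Or.inl ⟨Or.inl rfl, fun hh => hh.elim (fun h => hne h) (fun h => he1.2 h)⟩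
          · exact Or.inr ⟨Or.inl rfl, fun hh => hh.elim (fun h => hne h.symm) (fun h => he2.2 h)⟩
      have hcard : (symmDiff (insert e1 J) (insert e2 J)).ncard = 2 := by
        rw [hsd, Set.ncard_pair hne]
      exact ISet_not_adj hn hodd hsym hineq hT1 hT2 hcard
    · -- K \ J is a single point e; then K = insert e J ∈ I, contradiction
      obtain ⟨e, he⟩ := hKJne
      have h1 : (K \ J).ncard = 1 := by
        have : 0 < (K \ J).ncard := Set.ncard_pos (Set.toFinite _) |>.2 ⟨e, he⟩
        omega
      have hdiff : (K \ J) = {e} := by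
        refine (Set.eq_of_subset_of_ncard_le (Set.singleton_subset_iff.2 he) ?_
          (Set.toFinite _)).symm
        rw [h1, Set.ncard_singleton]
      have hcap : (K ∩ J).ncard + (K \ J).ncard = K.ncard :=
        Set.ncard_inter_add_ncard_diff_eq_ncard K J (Set.toFinite _)
      have hKJ : (K ∩ J).ncard = K.ncard - 1 := by omega
      have hJsub : J = K ∩ J := by
        refine Set.eq_of_subset_of_ncard_le ?_ ?_ (Set.toFinite _) |>.symm
        · exact Set.inter_subset_right
        · omega
      have hKeq : K = insert e J := by
        ext f
        constructor
        · intro hf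
          by_cases hfJ : f ∈ J
          · exact Or.inr hfJ
          · have : f ∈ K \ J := ⟨hf, hfJ⟩
            rw [hdiff] at this
            exact Or.inl this
        · rintro (rfl | hf)
          · exact he.1
          · exact (hJsub ▸ hf : f ∈ K ∩ J).1
      have := hA e he.1 he.2
      rw [← hKeq] at this
      exact hK.2.2 this

noncomputable def mrank' {α : Type*} (M : Matroid α) (X : Set α) : ℕ :=
  sSup {k | ∃ I, M.Indep I ∧ I ⊆ X ∧ I.ncard = k}

lemma mrank'_eq {α : Type*} {M : Matroid α} {X : Set α} {r : ℕ}
    (hex : ∃ J, M.Indep J ∧ J ⊆ X ∧ J.ncard = r)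
    (hub : ∀ J, M.Indep J → J ⊆ X → J.ncard ≤ r) : mrank' M X = r := by
  apply le_antisymm
  · apply csSup_le ⟨r, hex⟩
    rintro k ⟨J, hJ, hJX, rfl⟩
    exact hub J hJ hJX
  · exact le_csSup ⟨r, fun k ⟨J, hJ, hJX, hk⟩ => hk ▸ hub J hJ hJX⟩ hex

/-- Construct a large independent set containing the full leg `j`, one point in each
leg indexed by `S`, and avoiding leg `k`. -/
lemma construct_indep {lam : Set (En n) → ℕ} {X : Set (En n)} {j k : Fin n} (hn : 2 ≤ n)
    (hjk : j ≠ k) (hjX : leg n j ⊆ X) (S : Set (Fin n))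
    (hS : ∀ i ∈ S, (i, true) ∈ X ∨ (i, false) ∈ X) (hjS : j ∉ S) (hkS : k ∉ S) :
    ∃ J, J ⊆ X ∧ SpikeIndep n (ISet n lam) J ∧ J.ncard = S.ncard + 2 := by
  classical
  set pick : Fin n → En n := fun i => (i, if (i, true) ∈ X then true else false) with hpick
  have hpickX : ∀ i ∈ S, pick i ∈ X := by
    intro i hi
    by_cases h : (i, true) ∈ X
    · simpa [hpick, h] using h
    · rcases hS i hi with h' | h'
      · exact absurd h' h
      · simpa [hpick, h] using h'
  have hpickfst : ∀ i, (pick i).1 = i := fun i => rfl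
  set J := leg n j ∪ pick '' S with hJ
  have hfst : ∀ e ∈ J, e.1 = j ∨ e.1 ∈ S := by
    rintro e (he | ⟨i, hi, rfl⟩)
    · exact Or.inl (mem_leg.1 he)
    · exact Or.inr hi
  have hdisj : Disjoint (leg n j) (pick '' S) := by
    rw [Set.disjoint_left]
    rintro e he ⟨i, hi, rfl⟩
    rw [mem_leg] at he
    exact hjS (he ▸ hi)
  have hinj : Set.InjOn pick S := fun a _ b _ h => by
    have := congrArg Prod.fst h; simpa using this
  have hcard : J.ncard = S.ncard + 2 := by
    rw [hJ, Set.ncard_union_eq hdisj (Set.toFinite _) (Set.toFinite _),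
      Set.ncard_image_of_injOn hinj, leg, Set.ncard_insert_of_notMem (by simp),
      Set.ncard_singleton]
    omega
  have hScard : S.ncard + 2 ≤ n := by
    have hsub : S ⊆ Set.univ \ {j, k} := by
      intro i hi
      refine ⟨Set.mem_univ _, ?_⟩
      rintro (rfl | rfl)
      · exact hjS hi
      · exact hkS hi
    have h1 : (Set.univ \ ({j, k} : Set (Fin n))).ncard = n - 2 := by
      rw [Set.ncard_diff (Set.subset_univ _), Set.ncard_univ, Set.ncard_pair hjk]
      simp
    have := Set.ncard_le_ncard hsub (Set.toFinite _)
    omega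
  have hnoleg : ∀ a b : Fin n, a ≠ b → ¬ (leg n a ∪ leg n b ⊆ J) := by
    intro a b hab hsub
    have key : ∀ c : Fin n, c ≠ j → ¬ leg n c ⊆ J := by
      intro c hc hcsub
      have h1 : (c, true) ∈ J := hcsub (by simp [leg])
      have h2 : (c, false) ∈ J := hcsub (by simp [leg])
      have e1 : (c, true) ∈ pick '' S := by
        rcases h1 with h | h
        · exact absurd (mem_leg.1 h) hc
        · exact h
      have e2 : (c, false) ∈ pick '' S := by
        rcases h2 with h | h
        · exact absurd (mem_leg.1 h) hc
        · exact h
      obtain ⟨i1, _, hi1⟩ := e1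
      obtain ⟨i2, _, hi2⟩ := e2
      have hc1 : i1 = c := by have := congrArg Prod.fst hi1; simpa using this
      have hc2 : i2 = c := by have := congrArg Prod.fst hi2; simpa using this
      subst hc1; subst hc2
      have := (congrArg Prod.snd hi1).symm.trans (congrArg Prod.snd hi2)
      simp at this
    rcases eq_or_ne a j with rfl | ha
    · exact key b (Ne.symm hab) ((Set.union_subset_iff.1 hsub).2)
    · exact key a ha ((Set.union_subset_iff.1 hsub).1)
  have hnotI : J ∉ ISet n lam := by
    intro hI
    have htr := ISet_trans hI
    have hkmem : (k, true) ∉ J ∧ (k, false) ∉ J := by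
      constructor <;> intro h <;> rcases hfst _ h with h' | h'
      · exact hjk h'.symm
      · exact hkS h'
      · exact hjk h'.symm
      · exact hkS h'
    rcases htr k with ⟨h, _⟩ | ⟨_, h⟩
    · exact hkmem.1 h
    · exact hkmem.2 h
  refine ⟨J, ?_, ⟨by omega, hnoleg, hnotI⟩, hcard⟩
  rw [hJ]
  refine Set.union_subset hjX ?_
  rintro e ⟨i, hi, rfl⟩
  exact hpickX i hi

lemma full_leg_of_meets_all {X : Set (En n)} (hmeet : ∀ i : Fin n, ¬ Disjoint (leg n i) X)
    (htr : ¬ IsTransversal X) : ∃ j, leg n j ⊆ X := by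
  by_contra h
  push_neg at h
  apply htr
  intro i
  have h1 := not_disjoint_iff_meets.1 (hmeet i)
  have h2 := h i
  rw [leg_subset_iff] at h2
  tauto

section RankComp
variable {lam : Set (En n) → ℕ} {M : Matroid (En n)}
  (hM : ∀ J, M.Indep J ↔ SpikeIndep n (ISet n lam) J)

include hM

/-- rank of a set in `ISet`: `n - 1`. -/
lemma mrank'_of_mem_ISet (hn : 2 < n) {X : Set (En n)} (hX : X ∈ ISet n lam) :
    mrank' M X + 1 = n := by
  have htr := ISet_trans hX
  have hXn : X.ncard = n := transversal_ncard htr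
  have hne : X.Nonempty := by
    rw [Set.nonempty_iff_ne_empty]
    intro h
    rw [h] at hXn; simp at hXn; omega
  obtain ⟨x, hx⟩ := hne
  have hr : mrank' M X = n - 1 := by
    refine mrank'_eq ⟨X \ {x}, ?_, Set.diff_subset, ?_⟩ ?_
    · rw [hM]
      refine ⟨?_, ?_, ?_⟩
      · have := Set.ncard_le_ncard (Set.diff_subset (s := X) (t := {x})) (Set.toFinite _)
        omega
      · intro i j hij hsub
        exact transversal_noFull htr i ((Set.union_subset_iff.1 hsub).1.trans Set.diff_subset)
      · intro hmem
        have := transversal_ncard (ISet_trans hmem)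
        rw [Set.ncard_diff_singleton_of_mem hx, hXn] at this
        omega
    · rw [Set.ncard_diff_singleton_of_mem hx, hXn]
    · intro J hJ hJX
      rw [hM] at hJ
      by_contra hgt
      push_neg at hgt
      have hJn : J.ncard ≤ n := hJ.1
      have hJeq : J.ncard = n := by omega
      have : J = X := Set.eq_of_subset_of_ncard_le hJX (by omega) (Set.toFinite _)
      exact hJ.2.2 (this ▸ hX)
  omega

/-- rank of a set not in `ISet`: the free spike rank. -/
lemma mrank'_of_not_mem_ISet (hn : 2 < n) {X : Set (En n)} (hX : X ∉ ISet n lam) :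
    mrank' M X = freeSpikeRank n X := by
  have hub_n : ∀ J, M.Indep J → J ⊆ X → J.ncard ≤ n := fun J hJ _ => ((hM J).1 hJ).1
  by_cases hmeet : ∀ i : Fin n, ¬ Disjoint (leg n i) X
  · rw [freeSpikeRank, if_pos hmeet]
    by_cases htr : IsTransversal X
    · exact mrank'_eq ⟨X, (hM X).2 ⟨le_of_eq (transversal_ncard htr),
        fun i j hij hsub => transversal_noFull htr i (Set.union_subset_iff.1 hsub).1, hX⟩,
        subset_rfl, transversal_ncard htr⟩ hub_n
    · obtain ⟨j, hj⟩ := full_leg_of_meets_all hmeet htr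
      -- pick k ≠ j
      have hk : ∃ k : Fin n, k ≠ j := by
        rcases eq_or_ne j ⟨0, by omega⟩ with rfl | h
        · exact ⟨⟨1, by omega⟩, by simp [Fin.ext_iff]⟩
        · exact ⟨⟨0, by omega⟩, Ne.symm h⟩
      obtain ⟨k, hk⟩ := hk
      have hScard : (Set.univ \ ({j, k} : Set (Fin n))).ncard = n - 2 := by
        rw [Set.ncard_diff (Set.subset_univ _), Set.ncard_univ, Set.ncard_pair (Ne.symm hk)]
        simp
      obtain ⟨J, hJX, hJind, hJcard⟩ := construct_indep (lam := lam) (by omega) (Ne.symm hk) hj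
        (Set.univ \ {j, k})
        (fun i _ => not_disjoint_iff_meets.1 (hmeet i))
        (by simp) (by simp)
      refine mrank'_eq ⟨J, (hM J).2 hJind, hJX, ?_⟩ hub_n
      rw [hJcard, hScard]; omega
  · rw [freeSpikeRank, if_neg hmeet]
    by_cases hfull : ∃ i, leg n i ⊆ X
    · rw [if_pos hfull]
      obtain ⟨j, hj⟩ := hfull
      push_neg at hmeet
      obtain ⟨k, hk⟩ := hmeet
      rw [Set.disjoint_left] at hk
      have hkt : (k, true) ∉ X := hk (by simp [leg])
      have hkf : (k, false) ∉ X := hk (by simp [leg])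
      have hjk : j ≠ k := by
        rintro rfl
        exact hkt (hj (by simp [leg]))
      set S := {i : Fin n | (i, true) ∈ X ∨ (i, false) ∈ X} \ {j} with hS
      have hjmem : j ∈ {i : Fin n | (i, true) ∈ X ∨ (i, false) ∈ X} :=
        Or.inl (hj (by simp [leg]))
      have hScard : S.ncard = legCount X - 1 := by
        rw [hS, Set.ncard_diff_singleton_of_mem hjmem]; rfl
      have hlegpos : 1 ≤ legCount X := by
        have : 0 < legCount X := Set.ncard_pos (Set.toFinite _) |>.2 ⟨j, hjmem⟩
        omega
      obtain ⟨J, hJX, hJind, hJcard⟩ := construct_indep (lam := lam) (by omega) hjk hj S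
        (fun i hi => hi.1) (by simp [hS]) (by
          simp only [hS, Set.mem_diff, Set.mem_setOf_eq]
          rintro ⟨h | h, _⟩
          · exact hkt h
          · exact hkf h)
      refine mrank'_eq ⟨J, (hM J).2 hJind, hJX, by omega⟩ ?_
      intro J' hJ' hJ'X
      rw [hM] at hJ'
      calc J'.ncard ≤ legCount J' + 1 := ncard_le_legCount_add_one hJ'.2.1
        _ ≤ legCount X + 1 := by have := legCount_mono hJ'X; omega
    · rw [if_neg hfull]
      push_neg at hfull
      have hXcard : X.ncard = legCount X := ncard_of_noFull hfull
      refine mrank'_eq ⟨X, (hM X).2 ⟨?_, ?_, hX⟩, subset_rfl, rfl⟩ ?_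
      · rw [hXcard]; exact legCount_le X
      · intro i j hij hsub
        exact hfull i (Set.union_subset_iff.1 hsub).1
      · intro J hJ hJX
        exact Set.ncard_le_ncard hJX (Set.toFinite _)

end RankComp

lemma fsr_transversal {X : Set (En n)} (htr : IsTransversal X) :
    freeSpikeRank n X = n := by
  rw [freeSpikeRank, if_pos (fun i => transversal_meets htr i)]

lemma univ_not_transversal (hn : 0 < n) : ¬ IsTransversal (Set.univ : Set (En n)) := by
  intro h
  rcases h ⟨0, hn⟩ with ⟨_, h2⟩ | ⟨h2, _⟩ <;> exact h2 (Set.mem_univ _)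

lemma fsr_univ (hn : 0 < n) : freeSpikeRank n (Set.univ : Set (En n)) = n := by
  rw [freeSpikeRank, if_pos]
  intro i
  rw [not_disjoint_iff_meets]
  exact Or.inl (Set.mem_univ _)

end SpikeAux

open SpikeAux in
/-- If `n` is odd, every spiky function on `E_n` is the connectivity function of a
matroid. -/
theorem stmt13 {n : ℕ} (hn : 2 < n) (hodd : Odd n)
    (lam : Set (En n) → ℕ) (hs : IsSpiky n lam) :
    ∃ M : Matroid (En n), M.E = Set.univ ∧ ∀ X, (lam X : ℤ) = mconn M X := by
  classical
  obtain ⟨hsym, hlamN, hvals, hineq⟩ := hs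
  set M := (IndepMatroid.ofFinite (Set.finite_univ (α := En n)) (SpikeIndep n (ISet n lam))
    (spikeIndep_empty (by omega)) (fun J K hK hJK => spikeIndep_subset hK hJK)
    (fun J K hJ hK hlt => spikeIndep_aug hn hodd hsym hineq hJ hK hlt)
    (fun J _ => Set.subset_univ J)).matroid with hMdef
  have hME : M.E = Set.univ := rfl
  have hM : ∀ J, M.Indep J ↔ SpikeIndep n (ISet n lam) J := by
    intro J
    rw [hMdef, IndepMatroid.matroid_indep_iff, IndepMatroid.ofFinite_indep]
  have hmr : ∀ X : Set (En n), mrank M X = mrank' M X := fun _ => rfl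
  have hrE : mrank M M.E = n := by
    rw [hME, hmr]
    have huniv : (Set.univ : Set (En n)) ∉ ISet n lam := fun h =>
      univ_not_transversal (by omega) (ISet_trans h)
    rw [mrank'_of_not_mem_ISet hM hn huniv, fsr_univ (by omega)]
  refine ⟨M, hME, fun X => ?_⟩
  have hcompl : M.E \ X = Xᶜ := by rw [hME, ← Set.compl_eq_univ_diff]
  unfold mconn
  rw [hcompl, hrE, hmr X, hmr Xᶜ]
  by_cases htr : IsTransversal X
  · have htrc : IsTransversal Xᶜ := transversal_compl htr
    have hrX : (mrank' M X : ℤ) = n - (if X ∈ ISet n lam then 1 else 0) := by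
      by_cases h : X ∈ ISet n lam
      · have := mrank'_of_mem_ISet hM hn h
        rw [if_pos h]; push_cast; omega
      · rw [if_neg h, mrank'_of_not_mem_ISet hM hn h, fsr_transversal htr]; ring
    have hrXc : (mrank' M Xᶜ : ℤ) = n - (if Xᶜ ∈ ISet n lam then 1 else 0) := by
      by_cases h : Xᶜ ∈ ISet n lam
      · have := mrank'_of_mem_ISet hM hn h
        rw [if_pos h]; push_cast; omega
      · rw [if_neg h, mrank'_of_not_mem_ISet hM hn h, fsr_transversal htrc]; ring
    rw [hrX, hrXc]
    have hmemX : X ∈ ISet n lam ↔ (lam X + 2 = n ∨ (lam X + 1 = n ∧ Even (tcard X))) := by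
      constructor
      · exact fun h => h.2
      · exact fun h => ⟨htr, h⟩
    have hmemXc : Xᶜ ∈ ISet n lam ↔
        (lam Xᶜ + 2 = n ∨ (lam Xᶜ + 1 = n ∧ Even (tcard Xᶜ))) := by
      constructor
      · exact fun h => h.2
      · exact fun h => ⟨htrc, h⟩
    have hlamc : lam Xᶜ = lam X := (hsym X).symm
    have hparc : Even (tcard Xᶜ) ↔ ¬ Even (tcard X) := by
      rw [tcard_compl, Nat.even_sub (tcard_le X)]
      have : ¬ Even n := Nat.not_even_iff_odd.2 hodd
      tauto
    rcases hvals X htr with hv | hv | hv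
    · -- lam X = n - 2 : both in I
      have hv' : lam X + 2 = n := by omega
      rw [if_pos (hmemX.2 (Or.inl hv')), if_pos (hmemXc.2 (Or.inl (by omega)))]
      push_cast; omega
    · -- lam X = n - 1 : exactly one in I
      have hv' : lam X + 1 = n := by omega
      rcases Nat.even_or_odd (tcard X) with hpar | hpar
      · rw [if_pos (hmemX.2 (Or.inr ⟨hv', hpar⟩)),
          if_neg (fun h => by
            rcases hmemXc.1 h with h' | ⟨_, h'⟩
            · omega
            · exact (hparc.1 h') hpar)]
        push_cast; omega
      · have hpar' : ¬ Even (tcard X) := Nat.not_even_iff_odd.2 hpar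
        rw [if_neg (fun h => by
            rcases hmemX.1 h with h' | ⟨_, h'⟩
            · omega
            · exact hpar' h'),
          if_pos (hmemXc.2 (Or.inr ⟨by omega, hparc.2 hpar'⟩))]
        push_cast; omega
    · -- lam X = n : neither in I
      rw [if_neg (fun h => by rcases hmemX.1 h with h' | ⟨h', _⟩ <;> omega),
        if_neg (fun h => by rcases hmemXc.1 h with h' | ⟨h', _⟩ <;> omega)]
      push_cast; omega
  · have hXI : X ∉ ISet n lam := fun h => htr (ISet_trans h)
    have hXcI : Xᶜ ∉ ISet n lam := fun h =>
      htr (by simpa using transversal_compl (ISet_trans h))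
    rw [hlamN X htr, mrank'_of_not_mem_ISet hM hn hXI, mrank'_of_not_mem_ISet hM hn hXcI]
    unfold lamN
    ring
end

section
/- Let n be odd and λ a spiky function on E_n. Define I to be the set of transversals X with λ(X) = n−2, together with those even-parity transversals X with λ(X) = n−1 (parity of X is the parity of |{i : x_i ∈ X}|). Then I is an independent set in H_n, and for every transversal X, λ(X) = n − |I ∩ {X, E_n − X}|. -/
/-- A transversal has even parity if `|{i : x_i ∈ X}|` is even. -/
def EvenParity {n : ℕ} (X : Set (En n)) : Prop :=
  Even (Set.ncard {i : Fin n | (i, true) ∈ X})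


section Aux

private lemma trans_compl {n : ℕ} {X : Set (En n)} (h : IsTransversal X) :
    IsTransversal Xᶜ := by
  intro i
  rcases h i with ⟨h1, h2⟩ | ⟨h1, h2⟩
  · right; simp [h1, h2]
  · left; simp [h1, h2]

private lemma ne_compl {n : ℕ} (hn : 0 < n) {X : Set (En n)} (hX : IsTransversal X) :
    X ≠ Xᶜ := by
  intro h
  rcases hX ⟨0, hn⟩ with ⟨h1, _⟩ | ⟨_, h2⟩
  · have h1' := h1; rw [h] at h1'; exact h1' h1
  · have h2' := h2; rw [h] at h2'; exact h2' h2

private lemma ncard_prod_univ {n : ℕ} (s : Set (Fin n)) :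
    (s ×ˢ (Set.univ : Set Bool)).ncard = s.ncard * 2 := by
  rw [← Nat.card_coe_set_eq, ← Nat.card_coe_set_eq,
    Nat.card_congr (Equiv.Set.prod s Set.univ), Nat.card_prod]
  congr 1
  simp [Nat.card_congr (Equiv.Set.univ Bool)]

private lemma symmDiff_eq_prod {n : ℕ} {X Y : Set (En n)}
    (hX : IsTransversal X) (hY : IsTransversal Y) :
    symmDiff X Y = {i : Fin n | ¬ ((i, true) ∈ X ↔ (i, true) ∈ Y)} ×ˢ (Set.univ : Set Bool) := by
  ext ⟨i, b⟩
  rcases hX i with ⟨h1, h2⟩ | ⟨h1, h2⟩ <;> rcases hY i with ⟨h3, h4⟩ | ⟨h3, h4⟩ <;>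
    cases b <;> simp [Set.mem_symmDiff, h1, h2, h3, h4]

private lemma parity_of_symmDiff_one {α : Type*} [Finite α] {s t : Set α}
    (h : (symmDiff s t).ncard = 1) : Even s.ncard ↔ ¬ Even t.ncard := by
  have e1 : (s ∩ t).ncard + (s \ t).ncard = s.ncard :=
    Set.ncard_inter_add_ncard_diff_eq_ncard s t (Set.toFinite _)
  have e2 : (t ∩ s).ncard + (t \ s).ncard = t.ncard :=
    Set.ncard_inter_add_ncard_diff_eq_ncard t s (Set.toFinite _)
  have e3 : (symmDiff s t).ncard = (s \ t).ncard + (t \ s).ncard := by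
    rw [Set.symmDiff_def]
    exact Set.ncard_union_eq disjoint_sdiff_sdiff (Set.toFinite _) (Set.toFinite _)
  have e4 : (s ∩ t).ncard = (t ∩ s).ncard := by rw [Set.inter_comm]
  rw [Nat.even_iff, Nat.even_iff]
  omega

private lemma parity_adj {n : ℕ} {X Y : Set (En n)}
    (hX : IsTransversal X) (hY : IsTransversal Y)
    (h2 : (symmDiff X Y).ncard = 2) : EvenParity X ↔ ¬ EvenParity Y := by
  have hD : symmDiff {i : Fin n | (i, true) ∈ X} {i : Fin n | (i, true) ∈ Y}
      = {i : Fin n | ¬ ((i, true) ∈ X ↔ (i, true) ∈ Y)} := by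
    ext i; simp [Set.mem_symmDiff]; tauto
  have h1 : (symmDiff {i : Fin n | (i, true) ∈ X} {i : Fin n | (i, true) ∈ Y}).ncard = 1 := by
    rw [symmDiff_eq_prod hX hY, ncard_prod_univ] at h2
    rw [hD]; omega
  exact parity_of_symmDiff_one h1

private lemma parity_compl {n : ℕ} (hodd : Odd n) (X : Set (En n)) :
    EvenParity X ↔ ¬ EvenParity Xᶜ := by
  have hset : {i : Fin n | (i, true) ∈ Xᶜ} = {i : Fin n | (i, true) ∈ X}ᶜ := by
    ext i; simp
  have hc : {i : Fin n | (i, true) ∈ X}.ncard + {i : Fin n | (i, true) ∈ X}ᶜ.ncard = n := by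
    rw [Set.ncard_add_ncard_compl]; simp [Nat.card_eq_fintype_card]
  obtain ⟨k, hk⟩ := hodd
  simp only [EvenParity, hset, Nat.even_iff]
  omega

end Aux

/-- For odd `n`, the set `I` of transversals `X` with `λ(X) = n−2`, together with the
even-parity transversals with `λ(X) = n−1`, is independent in `H_n`, and
`λ(X) = n − |I ∩ {X, E_n − X}|` for every transversal `X`. -/

theorem stmt14 {n : ℕ} (hn : 2 < n) (hodd : Odd n)
    (lam : Set (En n) → ℕ) (hs : IsSpiky n lam)
    (I : Set (Set (En n)))
    (hI : I = {X | IsTransversal X ∧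
      (lam X = n - 2 ∨ (EvenParity X ∧ lam X = n - 1))}) :
    IndepInHn n I ∧
    (∀ X, IsTransversal X → (lam X : ℤ) = (n : ℤ) - ((I ∩ {X, Xᶜ}).ncard : ℤ)) := by
  obtain ⟨hsym, _, hval, hadj⟩ := hs
  subst hI
  refine ⟨⟨fun X hX => hX.1, ?_⟩, ?_⟩
  · rintro X ⟨hXt, hXm⟩ Y ⟨hYt, hYm⟩ ⟨-, -, hd⟩
    have hge := hadj X Y hXt hYt hd
    rcases hXm with hx | ⟨hxe, hx⟩ <;> rcases hYm with hy | ⟨hye, hy⟩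
    · omega
    · omega
    · omega
    · exact ((parity_adj hXt hYt hd).mp hxe) hye
  · intro X hXt
    have hXc := trans_compl hXt
    have hne : X ≠ Xᶜ := ne_compl (by omega) hXt
    have hlc : lam Xᶜ = lam X := (hsym X).symm
    rcases hval X hXt with h | h | h
    · have heq : {Z | IsTransversal Z ∧ (lam Z = n - 2 ∨ (EvenParity Z ∧ lam Z = n - 1))}
          ∩ {X, Xᶜ} = {X, Xᶜ} := by
        apply Set.inter_eq_self_of_subset_right
        rintro Z (rfl | rfl)
        · exact ⟨hXt, Or.inl h⟩
        · exact ⟨hXc, Or.inl (by omega)⟩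
      rw [heq, Set.ncard_pair hne]
      omega
    · by_cases hp : EvenParity X
      · have heq : {Z | IsTransversal Z ∧ (lam Z = n - 2 ∨ (EvenParity Z ∧ lam Z = n - 1))}
            ∩ {X, Xᶜ} = {X} := by
          ext Z
          simp only [Set.mem_inter_iff, Set.mem_setOf_eq, Set.mem_insert_iff,
            Set.mem_singleton_iff]
          constructor
          · rintro ⟨⟨hZt, hZm⟩, rfl | rfl⟩
            · rfl
            · rcases hZm with hz | ⟨hze, hz⟩
              · omega
              · exact absurd hze (((parity_compl hodd X).mp hp))
          · rintro rfl
            exact ⟨⟨hXt, Or.inr ⟨hp, h⟩⟩, Or.inl rfl⟩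
        rw [heq, Set.ncard_singleton]
        omega
      · have hpc : EvenParity Xᶜ := by
          by_contra hc
          exact hp ((parity_compl hodd X).mpr hc)
        have heq : {Z | IsTransversal Z ∧ (lam Z = n - 2 ∨ (EvenParity Z ∧ lam Z = n - 1))}
            ∩ {X, Xᶜ} = {Xᶜ} := by
          ext Z
          simp only [Set.mem_inter_iff, Set.mem_setOf_eq, Set.mem_insert_iff,
            Set.mem_singleton_iff]
          constructor
          · rintro ⟨⟨hZt, hZm⟩, rfl | rfl⟩
            · rcases hZm with hz | ⟨hze, hz⟩
              · omega
              · exact absurd hze hp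
            · rfl
          · rintro rfl
            exact ⟨⟨hXc, Or.inr ⟨hpc, by omega⟩⟩, Or.inr rfl⟩
        rw [heq, Set.ncard_singleton]
        omega
    · have heq : {Z | IsTransversal Z ∧ (lam Z = n - 2 ∨ (EvenParity Z ∧ lam Z = n - 1))}
          ∩ {X, Xᶜ} = ∅ := by
        ext Z
        simp only [Set.mem_inter_iff, Set.mem_setOf_eq, Set.mem_insert_iff,
          Set.mem_singleton_iff, Set.mem_empty_iff_false, iff_false, not_and]
        rintro ⟨hZt, hZm⟩ (rfl | rfl) <;> rcases hZm with hz | ⟨-, hz⟩ <;> omega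
      rw [heq, Set.ncard_empty]
      omega
end
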